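/- Let H, R > 0 with H·R² ≤ π², let K : (0, R] → ℝ be continuous with |K(x)| ≤ H for all x, and let G : (0, R] → ℝ be a C² function satisfying the Jacobi equation G″(r) + K(r)·G(r) = 0 with G(r) → 0 and G(r)/r → 1 as r → 0⁺. Then sin_H(r) ≤ G(r) ≤ sin_{−H}(r) for all r ∈ (0, R]. Moreover, if R ≤ π/(2√H), then r/2 ≤ G(r) ≤ 2r for all r ∈ (0, R]. -/

import Mathlib

open Set

/-- `sin_K`: the solution of the constant-curvature Jacobi equation. -/
noncomputable def sinK (K r : ℝ) : ℝ :=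
  if K < 0 then Real.sinh (Real.sqrt (-K) * r) / Real.sqrt (-K)
  else if K = 0 then r
  else Real.sin (Real.sqrt K * r) / Real.sqrt K

open Filter Real

lemma aux_le {f f' : ℝ → ℝ} {x y : ℝ} (hxy : x ≤ y)
    (hc : ContinuousOn f (Icc x y))
    (hd : ∀ r ∈ Ioo x y, HasDerivAt f (f' r) r)
    (h0 : ∀ r ∈ Ioo x y, 0 ≤ f' r) : f x ≤ f y := by
  have hmono := monotoneOn_of_deriv_nonneg (convex_Icc x y) hc
    (fun r hr => by
      rw [interior_Icc] at hr
      exact (hd r hr).differentiableAt.differentiableWithinAt)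
    (fun r hr => by
      rw [interior_Icc] at hr
      rw [(hd r hr).deriv]; exact h0 r hr)
  exact hmono (left_mem_Icc.mpr hxy) (right_mem_Icc.mpr hxy) hxy

lemma aux_ge {f f' : ℝ → ℝ} {x y : ℝ} (hxy : x ≤ y)
    (hc : ContinuousOn f (Icc x y))
    (hd : ∀ r ∈ Ioo x y, HasDerivAt f (f' r) r)
    (h0 : ∀ r ∈ Ioo x y, f' r ≤ 0) : f y ≤ f x := by
  have := aux_le (f := fun t => -f t) (f' := fun t => -f' t) hxy hc.neg
    (fun r hr => (hd r hr).neg) (fun r hr => neg_nonneg.mpr (h0 r hr))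
  linarith

lemma aux_sinh_le_mul_cosh {x : ℝ} (hx : 0 ≤ x) : Real.sinh x ≤ x * Real.cosh x := by
  have h := aux_le (f := fun t => t * Real.cosh t - Real.sinh t)
    (f' := fun t => t * Real.sinh t) (x := 0) (y := x) hx
    (by fun_prop)
    (fun r _ => by
      have h1 := ((hasDerivAt_id r).mul (Real.hasDerivAt_cosh r)).sub (Real.hasDerivAt_sinh r)
      refine h1.congr_deriv ?_; simp [id_eq, mul_comm])
    (fun r hr => mul_nonneg hr.1.le (Real.sinh_nonneg_iff.mpr hr.1.le))
  simpa using h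

lemma aux_sinh_pi_div_two_le : Real.sinh (π / 2) ≤ π := by
  have h1 : π / 2 < 1.575 := by nlinarith [Real.pi_lt_d2]
  have h2 : Real.sinh (π / 2) < Real.sinh 1.575 := Real.sinh_lt_sinh.mpr h1
  have h3 : Real.exp 0.2875 ≤ 1 / 0.7125 := by
    have h := Real.add_one_le_exp (-0.2875 : ℝ)
    rw [Real.exp_neg] at h
    have hep : (0:ℝ) < Real.exp 0.2875 := Real.exp_pos _
    have h' : (0.7125:ℝ) ≤ (Real.exp 0.2875)⁻¹ := by norm_num at h ⊢; linarith
    rw [le_div_iff₀ (by norm_num : (0:ℝ) < 0.7125)]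
    nlinarith [mul_inv_cancel₀ hep.ne']
  have h4 : Real.exp 1.575 = Real.exp 1 * (Real.exp 0.2875 * Real.exp 0.2875) := by
    rw [← Real.exp_add, ← Real.exp_add]; norm_num
  have h5 : Real.exp 1.575 ≤ 2.7182818286 * ((1/0.7125) * (1/0.7125)) := by
    rw [h4]
    have he := Real.exp_one_lt_d9
    have e1 : (0:ℝ) < Real.exp 0.2875 := Real.exp_pos _
    have := mul_le_mul h3 h3 e1.le (by norm_num)
    nlinarith [Real.exp_pos 1]
  have h6 : Real.sinh 1.575 < Real.exp 1.575 / 2 := by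
    rw [Real.sinh_eq]
    have := Real.exp_pos (-(1.575:ℝ))
    linarith
  have h7 : (2.7182818286 * ((1/0.7125) * (1/0.7125)) : ℝ) / 2 < 3 := by norm_num
  nlinarith [Real.pi_gt_three]

lemma aux_sinh_le_two_mul {x : ℝ} (hx : 0 ≤ x) (hx' : x ≤ π / 2) : Real.sinh x ≤ 2 * x := by
  have hπ : (0:ℝ) < π / 2 := by positivity
  have hconv : ConvexOn ℝ (Icc (0:ℝ) (π/2)) Real.sinh := by
    apply convexOn_of_deriv2_nonneg (convex_Icc _ _) Real.continuous_sinh.continuousOn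
    · exact fun r _ => Real.differentiable_sinh.differentiableAt.differentiableWithinAt
    · rw [Real.deriv_sinh]
      exact fun r _ => Real.differentiable_cosh.differentiableAt.differentiableWithinAt
    · intro r hr
      rw [interior_Icc] at hr
      have : deriv^[2] Real.sinh r = Real.sinh r := by
        simp [Function.iterate_succ, Real.deriv_sinh, Real.deriv_cosh]
      rw [this]
      exact Real.sinh_nonneg_iff.mpr hr.1.le
  set a := π / 2
  have ht0 : 0 ≤ x / a := by positivity
  have ht1 : x / a ≤ 1 := by rw [div_le_one hπ]; exact hx'
  have hcomb := hconv.2 (x := a) (y := 0) (right_mem_Icc.mpr hπ.le)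
    (left_mem_Icc.mpr hπ.le) ht0 (show (0:ℝ) ≤ 1 - x/a by linarith) (by ring)
  have hxa : (x/a) • a + (1 - x/a) • (0:ℝ) = x := by
    simp only [smul_eq_mul, mul_zero, add_zero]
    field_simp
  rw [hxa] at hcomb
  simp only [smul_eq_mul, Real.sinh_zero, mul_zero, add_zero] at hcomb
  have h2 : x / a * Real.sinh a ≤ x / a * π :=
    mul_le_mul_of_nonneg_left aux_sinh_pi_div_two_le ht0
  have hfin : x / a * π = 2 * x := by
    rw [show a = π/2 from rfl]
    field_simp
  linarith [hcomb, h2]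

set_option maxHeartbeats 2000000 in
/-- Comparison principle for the Jacobi equation (Corollary 2.6 of the paper). -/
theorem jacobi_comparison (H R : ℝ) (hH : 0 < H) (hR : 0 < R)
    (hHR : H * R ^ 2 ≤ Real.pi ^ 2)
    (K G G' : ℝ → ℝ)
    (hKc : ContinuousOn K (Ioc 0 R))
    (hKb : ∀ x ∈ Ioc (0:ℝ) R, |K x| ≤ H)
    (hG' : ∀ r ∈ Ioc (0:ℝ) R, HasDerivWithinAt G (G' r) (Ioc 0 R) r)
    (hG'' : ∀ r ∈ Ioc (0:ℝ) R, HasDerivWithinAt G' (-(K r * G r)) (Ioc 0 R) r)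
    (h0 : Filter.Tendsto G (nhdsWithin 0 (Ioi 0)) (nhds 0))
    (h1 : Filter.Tendsto (fun r => G r / r) (nhdsWithin 0 (Ioi 0)) (nhds 1)) :
    (∀ r ∈ Ioc (0:ℝ) R, sinK H r ≤ G r ∧ G r ≤ sinK (-H) r) ∧
    (R ≤ Real.pi / (2 * Real.sqrt H) →
      ∀ r ∈ Ioc (0:ℝ) R, r / 2 ≤ G r ∧ G r ≤ 2 * r) := by
  have hπ := Real.pi_pos
  have hh : 0 < Real.sqrt H := Real.sqrt_pos.mpr hH
  set h := Real.sqrt H with hhdef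
  have hh2 : h * h = H := Real.mul_self_sqrt hH.le
  have hRpi : h * R ≤ π := by nlinarith [mul_pos hh hR]
  -- derivatives of the comparison functions
  have hlin : ∀ r : ℝ, HasDerivAt (fun t : ℝ => h * t) h r := by
    intro r; simpa using (hasDerivAt_id r).const_mul h
  have hs : ∀ r : ℝ, HasDerivAt (fun t => Real.sin (h * t) / h) (Real.cos (h * r)) r := by
    intro r
    have h2 : HasDerivAt (fun t : ℝ => Real.sin (h * t)) (Real.cos (h * r) * h) r :=
      (Real.hasDerivAt_sin (h * r)).comp r (hlin r)
    have h3 := h2.div_const h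
    simpa [mul_div_assoc, div_self hh.ne'] using h3
  have hs' : ∀ r : ℝ, HasDerivAt (fun t => Real.cos (h * t))
      (-(H * (Real.sin (h * r) / h))) r := by
    intro r
    have h2 : HasDerivAt (fun t : ℝ => Real.cos (h * t)) (-Real.sin (h * r) * h) r :=
      (Real.hasDerivAt_cos (h * r)).comp r (hlin r)
    convert h2 using 1
    rw [← hh2]; field_simp
  have hcd : ∀ r : ℝ, HasDerivAt (fun t => Real.sinh (h * t) / h) (Real.cosh (h * r)) r := by
    intro r
    have h2 : HasDerivAt (fun t : ℝ => Real.sinh (h * t)) (Real.cosh (h * r) * h) r :=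
      (Real.hasDerivAt_sinh (h * r)).comp r (hlin r)
    have h3 := h2.div_const h
    simpa [mul_div_assoc, div_self hh.ne'] using h3
  have hcd' : ∀ r : ℝ, HasDerivAt (fun t => Real.cosh (h * t))
      (H * (Real.sinh (h * r) / h)) r := by
    intro r
    have h2 : HasDerivAt (fun t : ℝ => Real.cosh (h * t)) (Real.sinh (h * r) * h) r :=
      (Real.hasDerivAt_cosh (h * r)).comp r (hlin r)
    convert h2 using 1
    rw [← hh2]; field_simp
  -- continuity and interior derivatives of G
  have hGc : ContinuousOn G (Ioc 0 R) := fun r hr => (hG' r hr).continuousWithinAt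
  have hG'c : ContinuousOn G' (Ioc 0 R) := fun r hr => (hG'' r hr).continuousWithinAt
  have hGd : ∀ r ∈ Ioo (0:ℝ) R, HasDerivAt G (G' r) r := fun r hr =>
    (hG' r ⟨hr.1, hr.2.le⟩).hasDerivAt (Ioc_mem_nhds hr.1 hr.2)
  have hGd' : ∀ r ∈ Ioo (0:ℝ) R, HasDerivAt G' (-(K r * G r)) r := fun r hr =>
    (hG'' r ⟨hr.1, hr.2.le⟩).hasDerivAt (Ioc_mem_nhds hr.1 hr.2)
  -- limits of the quotients at 0⁺
  have hmul : Filter.Tendsto (fun r : ℝ => h * r) (nhdsWithin 0 (Ioi 0))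
      (nhdsWithin 0 (Ioi 0)) := by
    apply tendsto_nhdsWithin_of_tendsto_nhds_of_eventually_within
    · have hbase : Filter.Tendsto (fun r : ℝ => h * r) (nhds 0) (nhds 0) := by
        simpa using (continuous_mul_left h).tendsto (0:ℝ)
      exact hbase.mono_left nhdsWithin_le_nhds
    · filter_upwards [self_mem_nhdsWithin] with r hr
      exact mul_pos hh hr
  have tsin : Filter.Tendsto (fun x : ℝ => Real.sin x / x) (nhdsWithin 0 (Ioi 0)) (nhds 1) := by
    have hder := hasDerivAt_iff_tendsto_slope.mp (Real.hasDerivAt_sin 0)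
    rw [Real.cos_zero] at hder
    have h2 := hder.mono_left (nhdsWithin_mono (0:ℝ) (fun x hx => ne_of_gt hx))
    refine h2.congr (fun x => ?_)
    simp [slope_def_field]
  have tsinh : Filter.Tendsto (fun x : ℝ => Real.sinh x / x) (nhdsWithin 0 (Ioi 0)) (nhds 1) := by
    have hder := hasDerivAt_iff_tendsto_slope.mp (Real.hasDerivAt_sinh 0)
    rw [Real.cosh_zero] at hder
    have h2 := hder.mono_left (nhdsWithin_mono (0:ℝ) (fun x hx => ne_of_gt hx))
    refine h2.congr (fun x => ?_)
    simp [slope_def_field]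
  have t_s : Filter.Tendsto (fun r => G r / (Real.sin (h * r) / h)) (nhdsWithin 0 (Ioi 0))
      (nhds 1) := by
    have hq := tsin.comp hmul
    have hdd := h1.div hq one_ne_zero
    rw [div_one] at hdd
    refine hdd.congr' ?_
    filter_upwards [self_mem_nhdsWithin] with r hr
    rcases eq_or_ne (Real.sin (h * r)) 0 with hz | hz
    · simp [Pi.div_apply, Function.comp_apply, hz]
    · have hr0 : r ≠ 0 := ne_of_gt hr
      simp only [Pi.div_apply, Function.comp_apply]
      field_simp
  have t_c : Filter.Tendsto (fun r => G r / (Real.sinh (h * r) / h)) (nhdsWithin 0 (Ioi 0))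
      (nhds 1) := by
    have hq := tsinh.comp hmul
    have hdd := h1.div hq one_ne_zero
    rw [div_one] at hdd
    refine hdd.congr' ?_
    filter_upwards [self_mem_nhdsWithin] with r hr
    have hz : Real.sinh (h * r) ≠ 0 := by
      have : 0 < Real.sinh (h * r) :=
        lt_trans (mul_pos hh hr) (Real.self_lt_sinh_iff.mpr (mul_pos hh hr))
      exact this.ne'
    have hr0 : r ≠ 0 := ne_of_gt hr
    simp only [Pi.div_apply, Function.comp_apply]
    field_simp
  have key : ∀ b, b ∈ Ioc (0:ℝ) R → (∀ x ∈ Ioo (0:ℝ) b, 0 ≤ G x) →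
      ∀ r ∈ Ioc (0:ℝ) b,
        (Real.sin (h * r) ≠ 0 → Real.sin (h * r) / h ≤ G r) ∧
          G r ≤ Real.sinh (h * r) / h := by
    intro b hb hGnn
    have hbR : b ≤ R := hb.2
    have spos : ∀ x ∈ Ioo (0:ℝ) b, 0 < Real.sin (h * x) := by
      intro x hx
      apply Real.sin_pos_of_pos_of_lt_pi (mul_pos hh hx.1)
      calc h * x < h * b := mul_lt_mul_of_pos_left hx.2 hh
        _ ≤ h * R := mul_le_mul_of_nonneg_left hbR hh.le
        _ ≤ π := hRpi
    have shpos : ∀ x : ℝ, 0 < x → 0 < Real.sinh (h * x) := fun x hx =>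
      lt_trans (mul_pos hh hx) (Real.self_lt_sinh_iff.mpr (mul_pos hh hx))
    have scont : Continuous (fun t : ℝ => Real.sin (h * t) / h) := by fun_prop
    have ccont : Continuous (fun t : ℝ => Real.sinh (h * t) / h) := by fun_prop
    have coscont : Continuous (fun t : ℝ => Real.cos (h * t)) := by fun_prop
    have coshcont : Continuous (fun t : ℝ => Real.cosh (h * t)) := by fun_prop
    -- Wronskian with sin
    set W : ℝ → ℝ := fun t => G' t * (Real.sin (h * t) / h) - G t * Real.cos (h * t)
      with hWdef
    have Wc : ContinuousOn W (Ioc 0 R) :=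
      (hG'c.mul scont.continuousOn).sub (hGc.mul coscont.continuousOn)
    have Wd : ∀ x ∈ Ioo (0:ℝ) b,
        HasDerivAt W ((H - K x) * G x * (Real.sin (h * x) / h)) x := by
      intro x hx
      have hxR : x ∈ Ioo (0:ℝ) R := ⟨hx.1, lt_of_lt_of_le hx.2 hbR⟩
      have d1 := (hGd' x hxR).mul (hs x)
      have d2 := (hGd x hxR).mul (hs' x)
      refine (d1.sub d2).congr_deriv ?_
      ring
    have Wd_nonneg : ∀ x ∈ Ioo (0:ℝ) b, 0 ≤ (H - K x) * G x * (Real.sin (h * x) / h) := by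
      intro x hx
      have hK := hKb x ⟨hx.1, le_trans hx.2.le hbR⟩
      have hKH : K x ≤ H := le_trans (le_abs_self _) hK
      exact mul_nonneg (mul_nonneg (by linarith) (hGnn x hx))
        (div_nonneg (spos x hx).le hh.le)
    have Wnn : ∀ x ∈ Ioo (0:ℝ) b, 0 ≤ W x := by
      intro r₀ hr₀
      by_contra hneg
      push_neg at hneg
      set δ := -W r₀ with hδdef
      have hδ : 0 < δ := by rw [hδdef]; linarith
      have Wmono : ∀ a ∈ Ioc (0:ℝ) r₀, W a ≤ W r₀ := by
        intro a ha
        refine aux_le ha.2 (Wc.mono ?_)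
          (fun x hx => Wd x ⟨lt_trans ha.1 hx.1, lt_trans hx.2 hr₀.2⟩)
          (fun x hx => Wd_nonneg x ⟨lt_trans ha.1 hx.1, lt_trans hx.2 hr₀.2⟩)
        intro x hx
        exact ⟨lt_of_lt_of_le ha.1 hx.1, le_trans hx.2 (le_trans hr₀.2.le hbR)⟩
      set v : ℝ → ℝ := fun a => G a / (Real.sin (h * a) / h) - δ / a with hvdef
      have vd : ∀ a ∈ Ioo (0:ℝ) b, HasDerivAt v
          (W a / (Real.sin (h * a) / h) ^ 2 + δ / a ^ 2) a := by
        intro a ha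
        have haR : a ∈ Ioo (0:ℝ) R := ⟨ha.1, lt_of_lt_of_le ha.2 hbR⟩
        have d1 := (hGd a haR).div (hs a) (ne_of_gt (div_pos (spos a ha) hh))
        have d2 : HasDerivAt (fun a : ℝ => δ / a) (-(δ / a ^ 2)) a := by
          have hinv := (hasDerivAt_inv (ne_of_gt ha.1)).const_mul δ
          simp only [div_eq_mul_inv]
          refine hinv.congr_deriv ?_
          ring
        refine (d1.sub d2).congr_deriv ?_
        simp only [hWdef]
        ring
      have vmono : ∀ a ∈ Ioc (0:ℝ) r₀, v r₀ ≤ v a := by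
        intro a ha
        have hsub : Icc a r₀ ⊆ Ioo (0:ℝ) b := fun x hx =>
          ⟨lt_of_lt_of_le ha.1 hx.1, lt_of_le_of_lt hx.2 hr₀.2⟩
        refine aux_ge ha.2
          (fun x hx => ((vd x (hsub hx)).continuousAt).continuousWithinAt)
          (fun x hx => vd x (hsub ⟨hx.1.le, hx.2.le⟩)) ?_
        intro x hx
        have hxb : x ∈ Ioo (0:ℝ) b := hsub ⟨hx.1.le, hx.2.le⟩
        have hWa : W x ≤ -δ := by
          have := Wmono x ⟨hxb.1, hx.2.le⟩
          rw [hδdef]; linarith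
        have hs1 : 0 < Real.sin (h * x) / h := div_pos (spos x hxb) hh
        have hs2 : Real.sin (h * x) / h ≤ x := by
          rw [div_le_iff₀ hh]
          calc Real.sin (h * x) ≤ h * x := Real.sin_le (mul_pos hh hxb.1).le
            _ = x * h := mul_comm _ _
        have e1 : W x / (Real.sin (h * x) / h) ^ 2 ≤ -δ / (Real.sin (h * x) / h) ^ 2 :=
          (div_le_div_iff_of_pos_right (by positivity)).mpr hWa
        have e2 : δ / x ^ 2 ≤ δ / (Real.sin (h * x) / h) ^ 2 :=
          div_le_div_of_nonneg_left hδ.le (by positivity) (pow_le_pow_left₀ hs1.le hs2 2)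
        rw [neg_div] at e1
        linarith
      have hblow : ∀ a ∈ Ioc (0:ℝ) r₀, v r₀ + δ / a ≤ G a / (Real.sin (h * a) / h) := by
        intro a ha
        have hv := vmono a ha
        simp only [hvdef] at hv ⊢
        linarith
      have ev1 : ∀ᶠ a in nhdsWithin 0 (Ioi 0), G a / (Real.sin (h * a) / h) < 2 :=
        t_s.eventually (gt_mem_nhds (by norm_num))
      have ev2 : ∀ᶠ a in nhdsWithin 0 (Ioi 0), 2 - v r₀ < δ / a := by
        have hdiv : Filter.Tendsto (fun a : ℝ => δ / a) (nhdsWithin 0 (Ioi 0)) atTop := by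
          have h2 := Filter.Tendsto.const_mul_atTop hδ tendsto_inv_nhdsGT_zero
          refine h2.congr (fun a => ?_)
          rw [div_eq_mul_inv]
        exact hdiv.eventually_gt_atTop _
      have ev3 : ∀ᶠ a in nhdsWithin 0 (Ioi 0), a ∈ Ioc (0:ℝ) r₀ :=
        Ioc_mem_nhdsGT_of_mem ⟨le_refl (0:ℝ), hr₀.1⟩
      obtain ⟨a, ha1, ha2, ha3⟩ := (ev1.and (ev2.and ev3)).exists
      have hba := hblow a ha3
      simp only [hvdef] at hba ha2
      linarith
    have lower : ∀ r ∈ Ioc (0:ℝ) b, Real.sin (h * r) ≠ 0 → Real.sin (h * r) / h ≤ G r := by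
      intro r hr hsr
      have hrpile : h * r ≤ π :=
        le_trans (mul_le_mul_of_nonneg_left (le_trans hr.2 hbR) hh.le) hRpi
      have hrpi : h * r < π := by
        rcases lt_or_eq_of_le hrpile with h' | h'
        · exact h'
        · exact absurd (by rw [h']; exact Real.sin_pi) hsr
      have hsinr : 0 < Real.sin (h * r) := Real.sin_pos_of_pos_of_lt_pi (mul_pos hh hr.1) hrpi
      have hsr2 : 0 < Real.sin (h * r) / h := div_pos hsinr hh
      have sposIcc : ∀ a, 0 < a → ∀ x ∈ Icc a r, 0 < Real.sin (h * x) / h := by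
        intro a ha x hx
        apply div_pos _ hh
        apply Real.sin_pos_of_pos_of_lt_pi (mul_pos hh (lt_of_lt_of_le ha hx.1))
        exact lt_of_le_of_lt (mul_le_mul_of_nonneg_left hx.2 hh.le) hrpi
      have mono : ∀ a ∈ Ioc (0:ℝ) r,
          G a / (Real.sin (h * a) / h) ≤ G r / (Real.sin (h * r) / h) := by
        intro a ha
        refine aux_le (f := fun x => G x / (Real.sin (h * x) / h))
          (f' := fun x => W x / (Real.sin (h * x) / h) ^ 2) ha.2 ?_ ?_ ?_
        · refine ContinuousOn.div (hGc.mono ?_) scont.continuousOn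
            (fun x hx => (sposIcc a ha.1 x hx).ne')
          intro x hx
          exact ⟨lt_of_lt_of_le ha.1 hx.1, le_trans hx.2 (le_trans hr.2 hbR)⟩
        · intro x hx
          have hxb : x ∈ Ioo (0:ℝ) b := ⟨lt_trans ha.1 hx.1, lt_of_lt_of_le hx.2 hr.2⟩
          have hd := (hGd x ⟨hxb.1, lt_of_lt_of_le hxb.2 hbR⟩).div (hs x)
            (div_pos (spos x hxb) hh).ne'
          exact hd
        · intro x hx
          have hxb : x ∈ Ioo (0:ℝ) b := ⟨lt_trans ha.1 hx.1, lt_of_lt_of_le hx.2 hr.2⟩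
          exact div_nonneg (Wnn x hxb) (sq_nonneg _)
      have hev : ∀ᶠ a in nhdsWithin 0 (Ioi 0),
          G a / (Real.sin (h * a) / h) ≤ G r / (Real.sin (h * r) / h) := by
        filter_upwards [Ioc_mem_nhdsGT_of_mem ⟨le_refl (0:ℝ), hr.1⟩] with a ha
        exact mono a ha
      have h1le : (1:ℝ) ≤ G r / (Real.sin (h * r) / h) := le_of_tendsto t_s hev
      rwa [one_le_div hsr2] at h1le
    -- Wronskian with sinh
    set W2 : ℝ → ℝ := fun t => G' t * (Real.sinh (h * t) / h) - G t * Real.cosh (h * t)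
      with hW2def
    have W2c : ContinuousOn W2 (Ioc 0 R) :=
      (hG'c.mul ccont.continuousOn).sub (hGc.mul coshcont.continuousOn)
    have W2d : ∀ x ∈ Ioo (0:ℝ) b,
        HasDerivAt W2 ((-H - K x) * G x * (Real.sinh (h * x) / h)) x := by
      intro x hx
      have hxR : x ∈ Ioo (0:ℝ) R := ⟨hx.1, lt_of_lt_of_le hx.2 hbR⟩
      have d1 := (hGd' x hxR).mul (hcd x)
      have d2 := (hGd x hxR).mul (hcd' x)
      refine (d1.sub d2).congr_deriv ?_
      ring
    have W2d_nonpos : ∀ x ∈ Ioo (0:ℝ) b, (-H - K x) * G x * (Real.sinh (h * x) / h) ≤ 0 := by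
      intro x hx
      have hK := hKb x ⟨hx.1, le_trans hx.2.le hbR⟩
      have hKH : -H ≤ K x := neg_le_of_abs_le hK
      have hfac : (-H - K x) * G x ≤ 0 :=
        mul_nonpos_iff.mpr (Or.inr ⟨by linarith, hGnn x hx⟩)
      exact mul_nonpos_iff.mpr (Or.inr ⟨hfac, div_nonneg (shpos x hx.1).le hh.le⟩)
    have W2np : ∀ x ∈ Ioo (0:ℝ) b, W2 x ≤ 0 := by
      intro r₀ hr₀
      by_contra hneg
      push_neg at hneg
      set δ := W2 r₀ with hδdef
      set C := Real.cosh (h * R) with hCdef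
      have hC : 0 < C := Real.cosh_pos _
      have hcx : ∀ x : ℝ, 0 < x → x ≤ R → Real.sinh (h * x) / h ≤ C * x := by
        intro x hx hxR
        rw [div_le_iff₀ hh]
        calc Real.sinh (h * x) ≤ (h * x) * Real.cosh (h * x) :=
              aux_sinh_le_mul_cosh (mul_pos hh hx).le
          _ ≤ (h * x) * C := by
              apply mul_le_mul_of_nonneg_left _ (mul_pos hh hx).le
              rw [hCdef, Real.cosh_le_cosh, abs_of_pos (mul_pos hh hx), abs_of_pos (mul_pos hh hR)]
              exact mul_le_mul_of_nonneg_left hxR hh.le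
          _ = C * x * h := by ring
      have hδ : 0 < δ := by rw [hδdef]; exact hneg
      have W2mono : ∀ a ∈ Ioc (0:ℝ) r₀, W2 r₀ ≤ W2 a := by
        intro a ha
        refine aux_ge ha.2 (W2c.mono ?_)
          (fun x hx => W2d x ⟨lt_trans ha.1 hx.1, lt_trans hx.2 hr₀.2⟩)
          (fun x hx => W2d_nonpos x ⟨lt_trans ha.1 hx.1, lt_trans hx.2 hr₀.2⟩)
        intro x hx
        exact ⟨lt_of_lt_of_le ha.1 hx.1, le_trans hx.2 (le_trans hr₀.2.le hbR)⟩
      set δ' := δ / C ^ 2 with hδ'def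
      have hδ' : 0 < δ' := by rw [hδ'def]; positivity
      set v : ℝ → ℝ := fun a => G a / (Real.sinh (h * a) / h) + δ' / a with hvdef
      have vd : ∀ a ∈ Ioo (0:ℝ) b, HasDerivAt v
          (W2 a / (Real.sinh (h * a) / h) ^ 2 - δ' / a ^ 2) a := by
        intro a ha
        have haR : a ∈ Ioo (0:ℝ) R := ⟨ha.1, lt_of_lt_of_le ha.2 hbR⟩
        have d1 := (hGd a haR).div (hcd a) (ne_of_gt (div_pos (shpos a ha.1) hh))
        have d2 : HasDerivAt (fun a : ℝ => δ' / a) (-(δ' / a ^ 2)) a := by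
          have hinv := (hasDerivAt_inv (ne_of_gt ha.1)).const_mul δ'
          simp only [div_eq_mul_inv]
          refine hinv.congr_deriv ?_
          ring
        refine (d1.add d2).congr_deriv ?_
        simp only [hW2def]; ring
      have vmono : ∀ a ∈ Ioc (0:ℝ) r₀, v a ≤ v r₀ := by
        intro a ha
        have hsub : Icc a r₀ ⊆ Ioo (0:ℝ) b := fun x hx =>
          ⟨lt_of_lt_of_le ha.1 hx.1, lt_of_le_of_lt hx.2 hr₀.2⟩
        refine aux_le ha.2
          (fun x hx => ((vd x (hsub hx)).continuousAt).continuousWithinAt)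
          (fun x hx => vd x (hsub ⟨hx.1.le, hx.2.le⟩)) ?_
        intro x hx
        have hxb : x ∈ Ioo (0:ℝ) b := hsub ⟨hx.1.le, hx.2.le⟩
        have hWa : δ ≤ W2 x := by
          have hm := W2mono x ⟨hxb.1, hx.2.le⟩
          rw [hδdef]; linarith
        have hc1 : 0 < Real.sinh (h * x) / h := div_pos (shpos x hxb.1) hh
        have hc2 : Real.sinh (h * x) / h ≤ C * x :=
          hcx x hxb.1 (le_trans hxb.2.le hbR)
        have e1 : δ / (Real.sinh (h * x) / h) ^ 2 ≤ W2 x / (Real.sinh (h * x) / h) ^ 2 :=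
          (div_le_div_iff_of_pos_right (by positivity)).mpr hWa
        have e2 : δ / (C * x) ^ 2 ≤ δ / (Real.sinh (h * x) / h) ^ 2 :=
          div_le_div_of_nonneg_left hδ.le (by positivity) (pow_le_pow_left₀ hc1.le hc2 2)
        have e3 : δ' / x ^ 2 = δ / (C * x) ^ 2 := by
          rw [hδ'def]
          field_simp
        rw [e3]
        linarith
      have hblow : ∀ a ∈ Ioc (0:ℝ) r₀, G a / (Real.sinh (h * a) / h) ≤ v r₀ - δ' / a := by
        intro a ha
        have hv := vmono a ha
        simp only [hvdef] at hv ⊢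
        linarith
      have ev1 : ∀ᶠ a in nhdsWithin 0 (Ioi 0), 0 < G a / (Real.sinh (h * a) / h) :=
        t_c.eventually (lt_mem_nhds (by norm_num))
      have ev2 : ∀ᶠ a in nhdsWithin 0 (Ioi 0), v r₀ < δ' / a := by
        have hdiv : Filter.Tendsto (fun a : ℝ => δ' / a) (nhdsWithin 0 (Ioi 0)) atTop := by
          have h2 := Filter.Tendsto.const_mul_atTop hδ' tendsto_inv_nhdsGT_zero
          refine h2.congr (fun a => ?_)
          rw [div_eq_mul_inv]
        exact hdiv.eventually_gt_atTop _
      have ev3 : ∀ᶠ a in nhdsWithin 0 (Ioi 0), a ∈ Ioc (0:ℝ) r₀ :=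
        Ioc_mem_nhdsGT_of_mem ⟨le_refl (0:ℝ), hr₀.1⟩
      obtain ⟨a, ha1, ha2, ha3⟩ := (ev1.and (ev2.and ev3)).exists
      have hba := hblow a ha3
      linarith
    have upper : ∀ r ∈ Ioc (0:ℝ) b, G r ≤ Real.sinh (h * r) / h := by
      intro r hr
      have hcr : 0 < Real.sinh (h * r) / h := div_pos (shpos r hr.1) hh
      have mono : ∀ a ∈ Ioc (0:ℝ) r,
          G r / (Real.sinh (h * r) / h) ≤ G a / (Real.sinh (h * a) / h) := by
        intro a ha
        refine aux_ge (f := fun x => G x / (Real.sinh (h * x) / h))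
          (f' := fun x => W2 x / (Real.sinh (h * x) / h) ^ 2) ha.2 ?_ ?_ ?_
        · refine ContinuousOn.div (hGc.mono ?_) ccont.continuousOn
            (fun x hx => (div_pos (shpos x (lt_of_lt_of_le ha.1 hx.1)) hh).ne')
          intro x hx
          exact ⟨lt_of_lt_of_le ha.1 hx.1, le_trans hx.2 (le_trans hr.2 hbR)⟩
        · intro x hx
          have hxb : x ∈ Ioo (0:ℝ) b := ⟨lt_trans ha.1 hx.1, lt_of_lt_of_le hx.2 hr.2⟩
          exact (hGd x ⟨hxb.1, lt_of_lt_of_le hxb.2 hbR⟩).div (hcd x)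
            (div_pos (shpos x hxb.1) hh).ne'
        · intro x hx
          have hxb : x ∈ Ioo (0:ℝ) b := ⟨lt_trans ha.1 hx.1, lt_of_lt_of_le hx.2 hr.2⟩
          exact div_nonpos_of_nonpos_of_nonneg (W2np x hxb) (sq_nonneg _)
      have hev : ∀ᶠ a in nhdsWithin 0 (Ioi 0),
          G r / (Real.sinh (h * r) / h) ≤ G a / (Real.sinh (h * a) / h) := by
        filter_upwards [Ioc_mem_nhdsGT_of_mem ⟨le_refl (0:ℝ), hr.1⟩] with a ha
        exact mono a ha
      have hle1 : G r / (Real.sinh (h * r) / h) ≤ 1 := ge_of_tendsto t_c hev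
      rwa [div_le_one hcr] at hle1
    exact fun r hr => ⟨lower r hr, upper r hr⟩
  -- G is positive on the open interval
  have hG0 : ∀ r ∈ Ioo (0:ℝ) R, 0 < G r := by
    have hev : ∀ᶠ x in nhdsWithin 0 (Ioi 0), 1/2 < G x / x :=
      h1.eventually (lt_mem_nhds (by norm_num))
    rw [eventually_nhdsWithin_iff] at hev
    obtain ⟨ε, hε, hball⟩ := Metric.eventually_nhds_iff.mp hev
    have hpos : ∀ x ∈ Ioo (0:ℝ) ε, 0 < G x := by
      intro x hx
      have hd : dist x 0 < ε := by
        rw [Real.dist_eq, sub_zero, abs_of_pos hx.1]; exact hx.2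
      have hgt := hball hd hx.1
      have := (lt_div_iff₀ hx.1).mp hgt
      nlinarith [hx.1]
    by_contra hcon
    push_neg at hcon
    obtain ⟨w, hw, hGw⟩ := hcon
    have hεw : ∀ y, 0 < y → G y ≤ 0 → ε ≤ y := by
      intro y hy hGy
      by_contra hlt
      push_neg at hlt
      exact absurd (hpos y ⟨hy, hlt⟩) (not_lt.mpr hGy)
    set S := Icc ε R ∩ G ⁻¹' (Iic 0) with hSdef
    have hwS : w ∈ S := ⟨⟨hεw w hw.1 hGw, hw.2.le⟩, hGw⟩
    have hSbdd : BddBelow S := ⟨ε, fun y hy => hy.1.1⟩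
    have hSclosed : IsClosed S := by
      have hc : ContinuousOn G (Icc ε R) :=
        hGc.mono (fun x hx => ⟨lt_of_lt_of_le hε hx.1, hx.2⟩)
      exact hc.preimage_isClosed_of_isClosed isClosed_Icc isClosed_Iic
    set r1 := sInf S with hr1def
    have hr1S : r1 ∈ S := hSclosed.csInf_mem ⟨w, hwS⟩ hSbdd
    have hr1pos : 0 < r1 := lt_of_lt_of_le hε hr1S.1.1
    have hr1R : r1 ≤ R := hr1S.1.2
    have hminimal : ∀ x ∈ Ioo (0:ℝ) r1, 0 < G x := by
      intro x hx
      by_contra hx0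
      push_neg at hx0
      have hxS : x ∈ S :=
        ⟨⟨hεw x hx.1 hx0, le_trans hx.2.le hr1R⟩, hx0⟩
      exact absurd (csInf_le hSbdd hxS) (not_le.mpr hx.2)
    have hkey := key r1 ⟨hr1pos, hr1R⟩ (fun x hx => (hminimal x hx).le) r1
      ⟨hr1pos, le_refl r1⟩
    rcases eq_or_ne (Real.sin (h * r1)) 0 with hz | hz
    · have hr1w : r1 ≤ w := csInf_le hSbdd hwS
      have hhr1 : h * r1 = π := by
        have hle : h * r1 ≤ π :=
          le_trans (mul_le_mul_of_nonneg_left hr1R hh.le) hRpi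
        rcases lt_or_eq_of_le hle with h' | h'
        · exact absurd hz
            (Real.sin_pos_of_pos_of_lt_pi (mul_pos hh hr1pos) h').ne'
        · exact h'
      have hRr1 : R ≤ r1 := by
        have : h * R ≤ h * r1 := by rw [hhr1]; exact hRpi
        exact le_of_mul_le_mul_left this hh
      linarith [hw.2]
    · have hlow := hkey.1 hz
      have hsinpos : 0 < Real.sin (h * r1) := by
        have hle : h * r1 ≤ π :=
          le_trans (mul_le_mul_of_nonneg_left hr1R hh.le) hRpi
        rcases lt_or_eq_of_le hle with h' | h'
        · exact Real.sin_pos_of_pos_of_lt_pi (mul_pos hh hr1pos) h'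
        · exact absurd (by rw [h']; exact Real.sin_pi) hz
      have hspos2 : 0 < Real.sin (h * r1) / h := div_pos hsinpos hh
      have hG1 : G r1 ≤ 0 := hr1S.2
      linarith
  -- main comparison on (0, R]
  have main : ∀ r ∈ Ioc (0:ℝ) R,
      Real.sin (h * r) / h ≤ G r ∧ G r ≤ Real.sinh (h * r) / h := by
    intro r hr
    have hkey := key R ⟨hR, le_refl R⟩ (fun x hx => (hG0 x hx).le) r hr
    refine ⟨?_, hkey.2⟩
    rcases eq_or_ne (Real.sin (h * r)) 0 with hz | hz
    · rw [hz, zero_div]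
      rcases lt_or_eq_of_le hr.2 with hrR | hrR
      · exact (hG0 r ⟨hr.1, hrR⟩).le
      · subst hrR
        have hne : (nhdsWithin r (Ioo (0:ℝ) r)).NeBot := by
          apply mem_closure_iff_nhdsWithin_neBot.mp
          rw [closure_Ioo hr.1.ne]
          exact ⟨hr.1.le, le_refl r⟩
        have ht : Filter.Tendsto G (nhdsWithin r (Ioo 0 r)) (nhds (G r)) :=
          (hGc r ⟨hr.1, le_refl r⟩).mono_left
            (nhdsWithin_mono r Ioo_subset_Ioc_self)
        refine ge_of_tendsto ht ?_
        filter_upwards [self_mem_nhdsWithin] with x hx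
        exact (hG0 x hx).le
    · exact hkey.1 hz
  have hsinK1 : ∀ r : ℝ, sinK H r = Real.sin (h * r) / h := by
    intro r
    rw [sinK, if_neg (not_lt.mpr hH.le), if_neg hH.ne']
  have hsinK2 : ∀ r : ℝ, sinK (-H) r = Real.sinh (h * r) / h := by
    intro r
    rw [sinK, if_pos (neg_lt_zero.mpr hH), neg_neg]
  refine ⟨fun r hr => ⟨by rw [hsinK1]; exact (main r hr).1,
    by rw [hsinK2]; exact (main r hr).2⟩, ?_⟩
  intro hR2 r hr
  have hhR2 : h * R ≤ π / 2 := by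
    calc h * R ≤ h * (π / (2 * h)) := mul_le_mul_of_nonneg_left hR2 hh.le
      _ = π / 2 := by field_simp
  have hhr2 : h * r ≤ π / 2 :=
    le_trans (mul_le_mul_of_nonneg_left hr.2 hh.le) hhR2
  obtain ⟨hl, hu⟩ := main r hr
  constructor
  · have hj := Real.mul_le_sin (mul_pos hh hr.1).le hhr2
    have hhalf : r / 2 ≤ Real.sin (h * r) / h := by
      rw [le_div_iff₀ hh]
      have h2 : r / 2 * h ≤ 2 / π * (h * r) := by
        rw [div_mul_eq_mul_div, div_mul_eq_mul_div,
          div_le_div_iff₀ (by norm_num : (0:ℝ) < 2) hπ]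
        nlinarith [Real.pi_le_four, mul_pos hh hr.1]
      linarith
    linarith
  · have h2 := aux_sinh_le_two_mul (mul_pos hh hr.1).le hhr2
    have : Real.sinh (h * r) / h ≤ 2 * r := by
      rw [div_le_iff₀ hh]
      nlinarith
    linarith
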